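/- arXiv:1702.01150 — 14 statements merged into one kernel-verified Lean document; each statement's English description precedes it below -/
import Mathlib

section
/- For any invertible element a and any element b in Z/nZ, the operations x*y = a·x + (1-a)·y, R1(x,y) = b·x + (1-b)·y, and R2(x,y) = a·(1-b)·x + (1 - a·(1-b))·y satisfy the oriented singquandle axioms: (1) R1(x ∗̄ y, z) * y = R1(x, z*y); (2) R2(x ∗̄ y, z) = R2(x, z*y) ∗̄ y; (3) (y ∗̄ R1(x,z)) * x = (y * R2(x,z)) ∗̄ z; (4) R2(x,y) = R1(y, x*y); (5) R1(x,y) * R2(x,y) = R2(y, x*y), where x ∗̄ y denotes the inverse operation a⁻¹·x + (1-a⁻¹)·y. -/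
theorem stmt_0 (n : ℕ) (a : (ZMod n)ˣ) (b : ZMod n) :
    let star : ZMod n → ZMod n → ZMod n := fun x y => (a : ZMod n) * x + (1 - (a : ZMod n)) * y
    let sbar : ZMod n → ZMod n → ZMod n := fun x y => ((a⁻¹ : (ZMod n)ˣ) : ZMod n) * x + (1 - ((a⁻¹ : (ZMod n)ˣ) : ZMod n)) * y
    let R1 : ZMod n → ZMod n → ZMod n := fun x y => b * x + (1 - b) * y
    let R2 : ZMod n → ZMod n → ZMod n := fun x y => (a : ZMod n) * (1 - b) * x + (1 - (a : ZMod n) * (1 - b)) * y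
    ∀ x y z : ZMod n,
      star (R1 (sbar x y) z) y = R1 x (star z y) ∧
      R2 (sbar x y) z = sbar (R2 x (star z y)) y ∧
      star (sbar y (R1 x z)) x = sbar (star y (R2 x z)) z ∧
      R2 x y = R1 y (star x y) ∧
      star (R1 x y) (R2 x y) = R2 y (star x y) := by
  intro star sbar R1 R2 x y z
  have h : (a : ZMod n) * ((a⁻¹ : (ZMod n)ˣ) : ZMod n) = 1 := by
    rw [← Units.val_mul, mul_inv_cancel, Units.val_one]
  set A : ZMod n := (a : ZMod n)
  set B : ZMod n := ((a⁻¹ : (ZMod n)ˣ) : ZMod n)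
  refine ⟨?_, ?_, ?_, ?_, ?_⟩ <;> simp only [star, sbar, R1, R2]
  · linear_combination (b * x - b * y) * h
  · linear_combination (-z + y + A * z - A * y - A * b * z + A * b * y) * h
  · linear_combination (z - x - A * z + A * x + A * b * z - A * b * x) * h
  · ring
  · ring
end

section
/- Let X = Z/nZ with x*y = a·x + (1-a)·y where a is a unit. If R1(x,y) = b·x + c·y and R2(x,y) = a·c·x + (c·(1-a) + b)·y satisfy the oriented singquandle axiom (y ∗̄ R1(x,z)) * x = (y * R2(x,z)) ∗̄ z for all x,y,z, and a-1 is a unit, then c = 1 - b. -/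
theorem stmt_1 (n : ℕ) (a : (ZMod n)ˣ) (b c : ZMod n)
    (ha1 : IsUnit ((a : ZMod n) - 1))
    (star : ZMod n → ZMod n → ZMod n)
    (hstar : ∀ x y, star x y = (a : ZMod n) * x + (1 - (a : ZMod n)) * y)
    (sbar : ZMod n → ZMod n → ZMod n)
    (hsbar : ∀ x y, sbar x y = ((a⁻¹ : (ZMod n)ˣ) : ZMod n) * x + (1 - ((a⁻¹ : (ZMod n)ˣ) : ZMod n)) * y)
    (R1 R2 : ZMod n → ZMod n → ZMod n)
    (hR1 : ∀ x y, R1 x y = b * x + c * y)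
    (hR2 : ∀ x y, R2 x y = (a : ZMod n) * c * x + (c * (1 - (a : ZMod n)) + b) * y)
    (hax3 : ∀ x y z, star (sbar y (R1 x z)) x = sbar (star y (R2 x z)) z) :
    c = 1 - b := by
  have h := hax3 0 0 1
  simp only [hstar, hsbar, hR1, hR2, mul_zero, zero_add, add_zero, mul_one] at h
  have e : (a : ZMod n) * ((a⁻¹ : (ZMod n)ˣ) : ZMod n) = 1 := by
    rw [← Units.val_mul, mul_inv_cancel, Units.val_one]
  have key : ((a : ZMod n) - 1) * c = ((a : ZMod n) - 1) * (1 - b) := by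
    linear_combination (a : ZMod n) * h +
      ((a : ZMod n) * c + (1 - (a : ZMod n)) * (c * (1 - (a : ZMod n)) + b) - 1) * e
  obtain ⟨u, hu⟩ := ha1
  exact u.mul_right_inj.mp (by rw [hu]; exact key)
end

section
/- Let G be an abelian group, f : G → G a group automorphism, g : G → G a group endomorphism with f ∘ g = g ∘ f. Define x*y = f(x) + y - f(y), x ∗̄ y = f⁻¹(x) + y - f⁻¹(y), R1(x,y) = g(y) + x - g(x), and R2(x,y) = g(f(x)) + y - g(f(y)). Then (G, *, R1, R2) is an oriented singquandle: the quandle axioms hold for * and the five oriented singquandle axioms hold. -/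
theorem stmt_2 (G : Type*) [AddCommGroup G] (f : G ≃+ G) (g : G →+ G)
    (hfg : ∀ x, f (g x) = g (f x)) :
    let star : G → G → G := fun x y => f x + y - f y
    let sbar : G → G → G := fun x y => f.symm x + y - f.symm y
    let R1 : G → G → G := fun x y => g y + x - g x
    let R2 : G → G → G := fun x y => g (f x) + y - g (f y)
    ∀ x y z : G,
      star x x = x ∧
      star (sbar x y) y = x ∧
      sbar (star x y) y = x ∧
      star (star x y) z = star (star x z) (star y z) ∧
      star (R1 (sbar x y) z) y = R1 x (star z y) ∧
      R2 (sbar x y) z = sbar (R2 x (star z y)) y ∧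
      star (sbar y (R1 x z)) x = sbar (star y (R2 x z)) z ∧
      R2 x y = R1 y (star x y) ∧
      star (R1 x y) (R2 x y) = R2 y (star x y) := by
  intro star sbar R1 R2 x y z
  have hfg' : ∀ x, f.symm (g x) = g (f.symm x) := by
    intro x; apply f.injective; rw [f.apply_symm_apply, hfg, f.apply_symm_apply]
  simp only [star, sbar, R1, R2, map_add, map_sub, hfg, hfg', f.apply_symm_apply,
    f.symm_apply_apply]
  refine ⟨by abel, by abel, by abel, by abel, by abel, by abel, by abel, by abel, by abel⟩
end

section
/- Let G be a group with quandle operation x*y = y⁻¹xy. Then R1(x,y) = xyxy⁻¹x⁻¹ and R2(x,y) = xyx⁻¹ make (G, *, R1, R2) an oriented singquandle. -/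
theorem stmt_4 (G : Type*) [Group G]  :
    let star : G → G → G := fun x y => y⁻¹ * x * y
    let sbar : G → G → G := fun x y => y * x * y⁻¹
    let R1 : G → G → G := fun x y => x * y * x * y⁻¹ * x⁻¹
    let R2 : G → G → G := fun x y => x * y * x⁻¹
    ∀ x y z : G,
      star (R1 (sbar x y) z) y = R1 x (star z y) ∧
      R2 (sbar x y) z = sbar (R2 x (star z y)) y ∧
      star (sbar y (R1 x z)) x = sbar (star y (R2 x z)) z ∧
      R2 x y = R1 y (star x y) ∧
      star (R1 x y) (R2 x y) = R2 y (star x y) := by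
  intro star sbar R1 R2 x y z
  refine ⟨?_, ?_, ?_, ?_, ?_⟩ <;> simp [star, sbar, R1, R2, mul_assoc]
end

section
/- Let G be a group with quandle operation x*y = y⁻¹xy. Then R1(x,y) = y⁻¹xy and R2(x,y) = y⁻¹x⁻¹yxy make (G, *, R1, R2) an oriented singquandle. -/
theorem stmt_5 (G : Type*) [Group G]  :
    let star : G → G → G := fun x y => y⁻¹ * x * y
    let sbar : G → G → G := fun x y => y * x * y⁻¹
    let R1 : G → G → G := fun x y => y⁻¹ * x * y
    let R2 : G → G → G := fun x y => y⁻¹ * x⁻¹ * y * x * y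
    ∀ x y z : G,
      star (R1 (sbar x y) z) y = R1 x (star z y) ∧
      R2 (sbar x y) z = sbar (R2 x (star z y)) y ∧
      star (sbar y (R1 x z)) x = sbar (star y (R2 x z)) z ∧
      R2 x y = R1 y (star x y) ∧
      star (R1 x y) (R2 x y) = R2 y (star x y) := by
  intro star sbar R1 R2 x y z
  refine ⟨?_, ?_, ?_, ?_, ?_⟩ <;> simp only [star, sbar, R1, R2] <;> group
end

section
/- Let G be a group with quandle operation x*y = y⁻¹xy. Then R1(x,y) = xy⁻¹x⁻¹yx and R2(x,y) = x⁻¹y⁻¹xy² make (G, *, R1, R2) an oriented singquandle. -/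
theorem stmt_6 (G : Type*) [Group G]  :
    let star : G → G → G := fun x y => y⁻¹ * x * y
    let sbar : G → G → G := fun x y => y * x * y⁻¹
    let R1 : G → G → G := fun x y => x * y⁻¹ * x⁻¹ * y * x
    let R2 : G → G → G := fun x y => x⁻¹ * y⁻¹ * x * y ^ 2
    ∀ x y z : G,
      star (R1 (sbar x y) z) y = R1 x (star z y) ∧
      R2 (sbar x y) z = sbar (R2 x (star z y)) y ∧
      star (sbar y (R1 x z)) x = sbar (star y (R2 x z)) z ∧
      R2 x y = R1 y (star x y) ∧
      star (R1 x y) (R2 x y) = R2 y (star x y) := by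
  intro star sbar R1 R2 x y z
  refine ⟨?_, ?_, ?_, ?_, ?_⟩ <;> simp only [star, sbar, R1, R2] <;> (try simp only [sq]) <;> group
end

section
/- Let G be a group with quandle operation x*y = y⁻¹xy, and let n ≥ 1. Then R1(x,y) = y(x⁻¹y)ⁿ and R2(x,y) = (y⁻¹x)^(n+1)·y make (G, *, R1, R2) an oriented singquandle. -/
theorem stmt_7 (G : Type*) [Group G] (n : ℕ) (hn : 1 ≤ n) :
    let star : G → G → G := fun x y => y⁻¹ * x * y
    let sbar : G → G → G := fun x y => y * x * y⁻¹
    let R1 : G → G → G := fun x y => y * (x⁻¹ * y) ^ n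
    let R2 : G → G → G := fun x y => (y⁻¹ * x) ^ (n + 1) * y
    ∀ x y z : G,
      star (R1 (sbar x y) z) y = R1 x (star z y) ∧
      R2 (sbar x y) z = sbar (R2 x (star z y)) y ∧
      star (sbar y (R1 x z)) x = sbar (star y (R2 x z)) z ∧
      R2 x y = R1 y (star x y) ∧
      star (R1 x y) (R2 x y) = R2 y (star x y) := by
  intro star sbar R1 R2 x y z
  simp only [star, sbar, R1, R2]
  refine ⟨?_, ?_, ?_, ?_, ?_⟩
  · rw [show (y * x * y⁻¹)⁻¹ * z = y * (x⁻¹ * (y⁻¹ * z * y)) * y⁻¹ by group, conj_pow]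
    group
  · rw [show z⁻¹ * (y * x * y⁻¹) = y * ((y⁻¹ * z * y)⁻¹ * x) * y⁻¹ by group, conj_pow]
    group
  · obtain ⟨w, rfl⟩ : ∃ w, x = z * w⁻¹ := ⟨(z⁻¹ * x)⁻¹, by group⟩
    group
  · rw [show y⁻¹ * (y⁻¹ * x * y) = y⁻¹ * (y⁻¹ * x) * (y⁻¹)⁻¹ by group, conj_pow]
    group
  · obtain ⟨w, rfl⟩ : ∃ w, x = y * w := ⟨y⁻¹ * x, by group⟩
    rw [show (y⁻¹ * (y * w) * y)⁻¹ * y = y⁻¹ * w⁻¹ * (y⁻¹)⁻¹ by group, conj_pow]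
    group
end

section
/- Let G be a group with x*y = y⁻¹xy, and let n ≥ 1. Then R1(x,y) = x(xy⁻¹)ⁿ and R2(x,y) = y(x⁻¹y)ⁿ satisfy the five oriented singquandle axioms. -/
theorem stmt_8 (G : Type*) [Group G] (n : ℕ) (hn : 1 ≤ n) :
    let star : G → G → G := fun x y => y⁻¹ * x * y
    let sbar : G → G → G := fun x y => y * x * y⁻¹
    let R1 : G → G → G := fun x y => x * (x * y⁻¹) ^ n
    let R2 : G → G → G := fun x y => y * (x⁻¹ * y) ^ n
    ∀ x y z : G,
      star (R1 (sbar x y) z) y = R1 x (star z y) ∧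
      R2 (sbar x y) z = sbar (R2 x (star z y)) y ∧
      star (sbar y (R1 x z)) x = sbar (star y (R2 x z)) z ∧
      R2 x y = R1 y (star x y) ∧
      star (R1 x y) (R2 x y) = R2 y (star x y) := by
  intro star sbar R1 R2 x y z
  refine ⟨?_, ?_, ?_, ?_, ?_⟩ <;> simp only [star, sbar, R1, R2]
  · rw [show x * (y⁻¹*z*y)⁻¹ = y⁻¹ * (y*x*y⁻¹ * z⁻¹) * y⁻¹⁻¹ by group, conj_pow]
    group
  · rw [show x⁻¹ * (y⁻¹*z*y) = y⁻¹ * ((y*x*y⁻¹)⁻¹ * z) * y⁻¹⁻¹ by group, conj_pow]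
    group
  · rw [show x⁻¹ * z = z⁻¹ * (x*z⁻¹)⁻¹ * z⁻¹⁻¹ by group, conj_pow, inv_pow]
    group
  · group
  · calc (y * (x⁻¹ * y) ^ n)⁻¹ * (x * (x * y⁻¹) ^ n) * (y * (x⁻¹ * y) ^ n)
        = (y⁻¹*x) ^ n * (y⁻¹*x) * y := by
          rw [show x * y⁻¹ = y * (y⁻¹*x) * y⁻¹ by group, conj_pow,
            show x⁻¹ * y = (y⁻¹*x)⁻¹ by group, inv_pow]
          group
      _ = (y⁻¹*x) * (y⁻¹*x) ^ n * y := by rw [pow_mul_comm']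
      _ = y⁻¹ * x * y * (y⁻¹ * (y⁻¹ * x * y)) ^ n := by
          rw [show y⁻¹ * (y⁻¹*x*y) = y⁻¹ * (y⁻¹*x) * y⁻¹⁻¹ by group, conj_pow]
          group
end

section
/- Let G be a group with x*y = y⁻¹xy, and let n ≥ 1. Then R1(x,y) = (xy⁻¹)ⁿ·x and R2(x,y) = (x⁻¹y)ⁿ·y satisfy the five oriented singquandle axioms. -/
private lemma cpow {G : Type*} [Group G] (n : ℕ) (g c : G) :
    (g * c * g⁻¹) ^ n = g * c ^ n * g⁻¹ := conj_pow

private lemma cpow_inv {G : Type*} [Group G] (n : ℕ) (g c : G) :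
    (g * c⁻¹ * g⁻¹) ^ n = g * (c ^ n)⁻¹ * g⁻¹ := by
  rw [← inv_pow]; exact conj_pow

theorem stmt_9 (G : Type*) [Group G] (n : ℕ) (hn : 1 ≤ n) :
    let star : G → G → G := fun x y => y⁻¹ * x * y
    let sbar : G → G → G := fun x y => y * x * y⁻¹
    let R1 : G → G → G := fun x y => (x * y⁻¹) ^ n * x
    let R2 : G → G → G := fun x y => (x⁻¹ * y) ^ n * y
    ∀ x y z : G,
      star (R1 (sbar x y) z) y = R1 x (star z y) ∧
      R2 (sbar x y) z = sbar (R2 x (star z y)) y ∧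
      star (sbar y (R1 x z)) x = sbar (star y (R2 x z)) z ∧
      R2 x y = R1 y (star x y) ∧
      star (R1 x y) (R2 x y) = R2 y (star x y) := by
  intro star sbar R1 R2 x y z
  simp only [star, sbar, R1, R2]
  refine ⟨?_, ?_, ?_, ?_, ?_⟩
  · rw [show (y * x * y⁻¹ * z⁻¹ : G) = y * (x * (y⁻¹ * z * y)⁻¹) * y⁻¹ by group,
      cpow]
    generalize (x * (y⁻¹ * z * y)⁻¹ : G) ^ n = t
    group
  · rw [show ((y * x * y⁻¹)⁻¹ * z : G) = y * (x⁻¹ * (y⁻¹ * z * y)) * y⁻¹ by group,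
      cpow]
    generalize (x⁻¹ * (y⁻¹ * z * y) : G) ^ n = t
    group
  · rw [show (x * z⁻¹ : G) = x * (x⁻¹ * z)⁻¹ * x⁻¹ by group, cpow_inv]
    generalize (x⁻¹ * z : G) ^ n = t
    group
  · rw [show (y * (y⁻¹ * x * y)⁻¹ : G) = x⁻¹ * y by group]
  · rw [show (x⁻¹ * y : G) = (y⁻¹ * x)⁻¹ by group, inv_pow,
      show (x * y⁻¹ : G) = x * (y⁻¹ * x) * x⁻¹ by group, cpow,
      show (y⁻¹ * (y⁻¹ * x * y) : G) = y⁻¹ * (y⁻¹ * x) * (y⁻¹)⁻¹ by group, cpow]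
    generalize (y⁻¹ * x : G) ^ n = t
    group
end

section
/- Let G be a group with x*y = y⁻¹xy, and let n ≥ 1. Then R1(x,y) = x(yx⁻¹)^(n+1) and R2(x,y) = x(y⁻¹x)ⁿ satisfy the five oriented singquandle axioms. -/
private lemma cpow_s10 {G : Type*} [Group G] (a b : G) (k : ℕ) :
    (a⁻¹ * b * a) ^ k = a⁻¹ * b ^ k * a := by
  simpa using conj_pow (a := a⁻¹) (b := b) (i := k)

private lemma shiftp {G : Type*} [Group G] (a b : G) (k : ℕ) :
    a * (b * a) ^ k = (a * b) ^ k * a :=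
  (SemiconjBy.pow_right (by unfold SemiconjBy; rw [mul_assoc]) k).eq

private lemma splitp {G : Type*} [Group G] (a b : G) (k : ℕ) :
    (a * b) ^ (k + 1) = a * (b * a) ^ k * b := by
  rw [pow_succ, ← mul_assoc, ← shiftp]

theorem stmt_10 (G : Type*) [Group G] (n : ℕ) (hn : 1 ≤ n) :
    let star : G → G → G := fun x y => y⁻¹ * x * y
    let sbar : G → G → G := fun x y => y * x * y⁻¹
    let R1 : G → G → G := fun x y => x * (y * x⁻¹) ^ (n + 1)
    let R2 : G → G → G := fun x y => x * (y⁻¹ * x) ^ n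
    ∀ x y z : G,
      star (R1 (sbar x y) z) y = R1 x (star z y) ∧
      R2 (sbar x y) z = sbar (R2 x (star z y)) y ∧
      star (sbar y (R1 x z)) x = sbar (star y (R2 x z)) z ∧
      R2 x y = R1 y (star x y) ∧
      star (R1 x y) (R2 x y) = R2 y (star x y) := by
  intro star sbar R1 R2 x y z
  refine ⟨?_, ?_, ?_, ?_, ?_⟩ <;> simp only [star, sbar, R1, R2]
  · rw [show y⁻¹ * z * y * x⁻¹ = y⁻¹ * (z * (y * x * y⁻¹)⁻¹) * y by group, cpow_s10]
    group
  · rw [show (y⁻¹ * z * y)⁻¹ * x = y⁻¹ * (z⁻¹ * (y * x * y⁻¹)) * y by group, cpow_s10]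
    group
  · rw [show (z⁻¹ * x) ^ n = x⁻¹ * ((z * x⁻¹) ^ (n + 1))⁻¹ * z by
      rw [← inv_pow, show (z * x⁻¹)⁻¹ = x * z⁻¹ by group, splitp]; group]
    group
  · rw [show y⁻¹ * x * y * y⁻¹ = y⁻¹ * x by group, pow_succ', ← mul_assoc,
      mul_inv_cancel_left]
  · rw [show (y⁻¹ * x * y)⁻¹ * y = y⁻¹ * (x⁻¹ * y) * y by group, cpow_s10,
      show (y⁻¹ * x) ^ n = ((x⁻¹ * y) ^ n)⁻¹ by
        rw [← inv_pow]; group,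
      splitp]
    group
end

section
/- Let G be a group, n ≥ 1, and define R1(x,y) = x(xy⁻¹)ⁿ, R2(x,y) = y(x⁻¹y)ⁿ. Then for all x, y ∈ G: (x = R1(y, y⁻¹xy) ∧ y = R2(y, y⁻¹xy)) if and only if (x⁻¹y)^(n+1) = 1. -/
theorem stmt_11 (G : Type*) [Group G] (n : ℕ) (hn : 1 ≤ n)
    (R1 R2 : G → G → G)
    (hR1 : ∀ x y, R1 x y = x * (x * y⁻¹) ^ n)
    (hR2 : ∀ x y, R2 x y = y * (x⁻¹ * y) ^ n) :
    ∀ x y : G,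
      (x = R1 y (y⁻¹ * x * y) ∧ y = R2 y (y⁻¹ * x * y)) ↔ (x⁻¹ * y) ^ (n + 1) = 1 := by
  intro x y
  rw [hR1, hR2]
  have e1 : y * (y⁻¹ * x * y)⁻¹ = x⁻¹ * y := by group
  rw [e1]
  have conjpow : (y⁻¹ * (y⁻¹ * x * y)) ^ n = y⁻¹ * (y⁻¹ * x) ^ n * y := by
    rw [show y⁻¹ * (y⁻¹ * x * y) = y⁻¹ * (y⁻¹ * x) * (y⁻¹)⁻¹ by group, conj_pow]
    group
  constructor
  · rintro ⟨ha, _⟩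
    calc (x⁻¹ * y) ^ (n + 1) = (x⁻¹ * y) * (x⁻¹ * y) ^ n := by rw [pow_succ']
    _ = x⁻¹ * (y * (x⁻¹ * y) ^ n) := by rw [mul_assoc]
    _ = x⁻¹ * x := by rw [← ha]
    _ = 1 := inv_mul_cancel x
  · intro h
    have h' : (y⁻¹ * x) ^ (n + 1) = 1 := by
      have : ((x⁻¹ * y)⁻¹) ^ (n + 1) = 1 := by rw [inv_pow, h, inv_one]
      simpa using this
    have key : x * (y⁻¹ * x) ^ n = y := by
      rw [pow_succ', mul_assoc] at h'
      exact (inv_mul_eq_one.mp h').symm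
    constructor
    · rw [pow_succ', mul_assoc] at h
      exact inv_mul_eq_one.mp h
    · rw [conjpow]
      have e3 : y⁻¹ * x * y * (y⁻¹ * (y⁻¹ * x) ^ n * y) = y⁻¹ * (x * (y⁻¹ * x) ^ n) * y := by
        group
      rw [e3, key]
      group
end

section
/- Let G be a group, n ≥ 1, and define R1(x,y) = (xy⁻¹)ⁿ·x, R2(x,y) = (x⁻¹y)ⁿ·y. Then for all x, y ∈ G: (x = R1(y, y⁻¹xy) ∧ y = R2(y, y⁻¹xy)) if and only if x⁻¹(x⁻¹y)ⁿy = 1. -/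
theorem stmt_12 (G : Type*) [Group G] (n : ℕ) (hn : 1 ≤ n)
    (R1 R2 : G → G → G)
    (hR1 : ∀ x y, R1 x y = (x * y⁻¹) ^ n * x)
    (hR2 : ∀ x y, R2 x y = (x⁻¹ * y) ^ n * y) :
    ∀ x y : G,
      (x = R1 y (y⁻¹ * x * y) ∧ y = R2 y (y⁻¹ * x * y)) ↔ x⁻¹ * (x⁻¹ * y) ^ n * y = 1 := by
  intro x y
  rw [hR1, hR2]
  have e1 : y * (y⁻¹ * x * y)⁻¹ = x⁻¹ * y := by group
  have e2 : y⁻¹ * (y⁻¹ * x * y) = y⁻¹ * (x⁻¹ * y)⁻¹ * y := by group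
  rw [e1, e2]
  have hconj : ∀ (c : G) (m : ℕ), (y⁻¹ * c * y) ^ m = y⁻¹ * c ^ m * y := by
    intro c m
    induction m with
    | zero => group
    | succ k ih => rw [pow_succ, pow_succ, ih]; group
  constructor
  · rintro ⟨h1, -⟩
    rw [mul_assoc, ← h1, inv_mul_cancel]
  · intro h
    have h1 : x = (x⁻¹ * y) ^ n * y := by
      rw [mul_assoc] at h
      exact inv_mul_eq_one.mp h
    refine ⟨h1, ?_⟩
    have key : (x⁻¹ * y) ^ n = x * y⁻¹ := by
      rw [eq_mul_inv_iff_mul_eq]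
      exact h1.symm
    rw [hconj, inv_pow, key]
    group
end

section
/- Let G be a group, n ≥ 1, and define R1(x,y) = x(yx⁻¹)^(n+1), R2(x,y) = x(y⁻¹x)ⁿ. Then for all x, y ∈ G: (x = R1(y, y⁻¹xy) ∧ y = R2(y, y⁻¹xy)) if and only if (y⁻¹x)ⁿ = 1. -/
private lemma conj_pow_eq {G : Type*} [Group G] (a b : G) (n : ℕ) :
    (a⁻¹ * b * a) ^ n = a⁻¹ * b ^ n * a := by
  induction n with
  | zero => group
  | succ k ih => rw [pow_succ, pow_succ, ih]; group

theorem stmt_13 (G : Type*) [Group G] (n : ℕ) (hn : 1 ≤ n)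
    (R1 R2 : G → G → G)
    (hR1 : ∀ x y, R1 x y = x * (y * x⁻¹) ^ (n + 1))
    (hR2 : ∀ x y, R2 x y = x * (y⁻¹ * x) ^ n) :
    ∀ x y : G,
      (x = R1 y (y⁻¹ * x * y) ∧ y = R2 y (y⁻¹ * x * y)) ↔ (y⁻¹ * x) ^ n = 1 := by
  intro x y
  have e1 : y⁻¹ * x * y * y⁻¹ = y⁻¹ * x := by group
  have e2 : (y⁻¹ * x * y)⁻¹ * y = y⁻¹ * (y⁻¹ * x)⁻¹ * y := by group
  rw [hR1, hR2, e1, e2]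
  constructor
  · rintro ⟨h1, -⟩
    have : y⁻¹ * x = (y⁻¹ * x) ^ (n + 1) := by
      have := congrArg (fun z => y⁻¹ * z) h1
      simpa [mul_assoc] using this
    rw [pow_succ] at this
    have := mul_right_cancel (this.symm.trans (one_mul _).symm)
    exact this
  · intro h
    constructor
    · rw [pow_succ, h, one_mul]; group
    · rw [conj_pow_eq, inv_pow, h]; group
end

section
/- Let Λ = Z[t,t⁻¹,v] and let X be a Λ-module. Set α = a·t + b·v + c·t·v for fixed a,b,c ∈ Z, and define x*y = t·x + (1-t)·y, x ∗̄ y = t⁻¹·x + (1-t⁻¹)·y, R1(x,y) = α·x + (1-α)·y, R2(x,y) = t·(1-α)·x + (1-t)·(1-α)·y + α·y. Then (X, *, R1, R2) satisfies the five oriented singquandle axioms. -/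
open LaurentPolynomial in
theorem stmt_16 (X : Type*) [AddCommGroup X]
    [Module (LaurentPolynomial (Polynomial ℤ)) X]
    (a b c : ℤ) :
    let t : LaurentPolynomial (Polynomial ℤ) := T 1
    let tinv : LaurentPolynomial (Polynomial ℤ) := T (-1)
    let v : LaurentPolynomial (Polynomial ℤ) := LaurentPolynomial.C Polynomial.X
    let α : LaurentPolynomial (Polynomial ℤ) := a • t + b • v + c • (t * v)
    let star : X → X → X := fun x y => t • x + (1 - t) • y
    let sbar : X → X → X := fun x y => tinv • x + (1 - tinv) • y
    let R1 : X → X → X := fun x y => α • x + (1 - α) • y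
    let R2 : X → X → X := fun x y => (t * (1 - α)) • x + ((1 - t) * (1 - α)) • y + α • y
    ∀ x y z : X,
      star (R1 (sbar x y) z) y = R1 x (star z y) ∧
      R2 (sbar x y) z = sbar (R2 x (star z y)) y ∧
      star (sbar y (R1 x z)) x = sbar (star y (R2 x z)) z ∧
      R2 x y = R1 y (star x y) ∧
      star (R1 x y) (R2 x y) = R2 y (star x y) := by
  intro t tinv v α star sbar R1 R2
  have h : t * tinv = 1 := by
    show T 1 * T (-1) = 1
    rw [← T_add]
    norm_num
  have hsb : ∀ u w : X, star (sbar u w) w = u := by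
    intro u w
    simp only [star, sbar]
    match_scalars
    · linear_combination h
    · linear_combination -h
  have hbs : ∀ u w : X, sbar (star u w) w = u := by
    intro u w
    simp only [star, sbar]
    match_scalars
    · linear_combination h
    · linear_combination -h
  have haux1 : ∀ w y z : X, star (R1 w z) y = R1 (star w y) (star z y) := by
    intro w y z
    simp only [star, R1]
    match_scalars <;> ring
  have haux2 : ∀ w y z : X, R2 (star w y) (star z y) = star (R2 w z) y := by
    intro w y z
    simp only [star, R2]
    match_scalars <;> ring
  have haux3 : ∀ u x z : X, star (star u x) z = star (star u (R1 x z)) (R2 x z) := by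
    intro u x z
    simp only [star, R1, R2]
    match_scalars <;> ring
  intro x y z
  refine ⟨?_, ?_, ?_, ?_, ?_⟩
  · conv_rhs => rw [← hsb x y]
    rw [haux1]
  · calc R2 (sbar x y) z
        = sbar (star (R2 (sbar x y) z) y) y := (hbs _ _).symm
      _ = sbar (R2 (star (sbar x y) y) (star z y)) y := by rw [haux2]
      _ = sbar (R2 x (star z y)) y := by rw [hsb]
  · calc star (sbar y (R1 x z)) x
        = sbar (star (star (sbar y (R1 x z)) x) z) z := (hbs _ _).symm
      _ = sbar (star (star (sbar y (R1 x z)) (R1 x z)) (R2 x z)) z := by rw [← haux3]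
      _ = sbar (star y (R2 x z)) z := by rw [hsb]
  · simp only [star, R1, R2]
    match_scalars <;> ring
  · simp only [star, R1, R2]
    match_scalars <;> ring
end
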